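/- For any rational polynomial m ∈ Q[q] and any positive integer n, the sum over all partitions λ of n of the multinomial coefficient binom(m; E(λ)) equals binom(m+n−1, n), where E(λ) is the multiset of multiplicities of λ and binom(m; k_1,…,k_s) = m(m−1)⋯(m+1−∑k_i)/(k_1!⋯k_s!). -/

import Mathlib

open Polynomial


/-- Finset of all lists whose coercion is the given multiset. -/
noncomputable def perms (m : Multiset ℕ) : Finset (List ℕ) := m.toList.permutations.toFinset

lemma mem_perms {m : Multiset ℕ} {l : List ℕ} : l ∈ perms m ↔ (l : Multiset ℕ) = m := by
  rw [perms, List.mem_toFinset, List.mem_permutations, ← Multiset.coe_eq_coe,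
    Multiset.coe_toList]

lemma prod_factorial_erase {m : Multiset ℕ} {a : ℕ} (h : a ∈ m) :
    ∏ b ∈ m.toFinset, (m.count b).factorial
      = m.count a * ∏ b ∈ (m.erase a).toFinset, ((m.erase a).count b).factorial := by
  have hsub : (m.erase a).toFinset ⊆ m.toFinset := by
    intro b hb
    exact Multiset.mem_toFinset.mpr (Multiset.mem_of_mem_erase (Multiset.mem_toFinset.mp hb))
  have h1 : ∏ b ∈ (m.erase a).toFinset, ((m.erase a).count b).factorial
      = ∏ b ∈ m.toFinset, ((m.erase a).count b).factorial := by
    refine (Finset.prod_subset hsub ?_)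
    intro b _ hb
    have h0 : (m.erase a).count b = 0 := by
      by_contra hc
      exact hb (Multiset.mem_toFinset.mpr (Multiset.count_pos.mp (Nat.pos_of_ne_zero hc)))
    rw [h0]; rfl
  have ha : a ∈ m.toFinset := Multiset.mem_toFinset.mpr h
  rw [h1, ← Finset.mul_prod_erase _ _ ha, ← Finset.mul_prod_erase _ _ ha, ← mul_assoc]
  have hcount : ∀ b ∈ m.toFinset.erase a, ((m.erase a).count b).factorial
      = (m.count b).factorial := by
    intro b hb
    rw [Multiset.count_erase_of_ne (Finset.mem_erase.mp hb).1]
  rw [Finset.prod_congr rfl hcount]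
  congr 1
  rw [Multiset.count_erase_self]
  exact (Nat.mul_factorial_pred (Multiset.count_pos.mpr h).ne').symm

lemma perms_card : ∀ (N : ℕ) (m : Multiset ℕ), Multiset.card m = N →
    (perms m).card * ∏ b ∈ m.toFinset, (m.count b).factorial = N.factorial := by
  intro N
  induction N with
  | zero =>
    intro m hm
    rw [Multiset.card_eq_zero] at hm
    subst hm
    simp [perms]
  | succ N IH =>
    intro m hm
    have hm0 : m ≠ 0 := by
      intro h; rw [h] at hm; simp at hm
    have hsplit : perms m
        = m.toFinset.biUnion (fun a => (perms (m.erase a)).image (a :: ·)) := by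
      ext l
      simp only [mem_perms, Finset.mem_biUnion, Finset.mem_image, Multiset.mem_toFinset]
      constructor
      · intro hl
        match l with
        | [] => exact absurd hl.symm (by simpa using hm0)
        | a :: t =>
          refine ⟨a, ?_, t, ?_, rfl⟩
          · rw [← hl]; simp
          · rw [← hl, ← Multiset.cons_coe, Multiset.erase_cons_head]
      · rintro ⟨a, ha, t, ht, rfl⟩
        rw [← Multiset.cons_coe, ht, Multiset.cons_erase ha]
    have hdisj : ∀ a ∈ m.toFinset, ∀ b ∈ m.toFinset, a ≠ b →
        Disjoint ((perms (m.erase a)).image (a :: ·)) ((perms (m.erase b)).image (b :: ·)) := by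
      intro a _ b _ hab
      rw [Finset.disjoint_left]
      rintro l hla hlb
      obtain ⟨t, _, rfl⟩ := Finset.mem_image.mp hla
      obtain ⟨t', _, h⟩ := Finset.mem_image.mp hlb
      exact hab (List.head_eq_of_cons_eq h.symm)
    rw [hsplit, Finset.card_biUnion hdisj, Finset.sum_mul]
    have hterm : ∀ a ∈ m.toFinset,
        ((perms (m.erase a)).image (a :: ·)).card * ∏ b ∈ m.toFinset, (m.count b).factorial
          = m.count a * N.factorial := by
      intro a ha
      have ham : a ∈ m := Multiset.mem_toFinset.mp ha
      rw [Finset.card_image_of_injective _ (List.cons_injective), prod_factorial_erase ham,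
        ← mul_assoc, mul_comm ((perms (m.erase a)).card) (m.count a), mul_assoc,
        IH (m.erase a) (by rw [Multiset.card_erase_of_mem ham, hm]; rfl)]
    rw [Finset.sum_congr rfl hterm, ← Finset.sum_mul, Multiset.toFinset_sum_count_eq, hm,
      Nat.factorial_succ]

lemma fiber_card (n : ℕ) (P : n.Partition) :
    (Finset.univ.filter fun c : Composition n => Nat.Partition.ofComposition n c = P).card
        * ∏ b ∈ P.parts.toFinset, (P.parts.count b).factorial
      = (Multiset.card P.parts).factorial := by
  have hmem : ∀ c : Composition n,
      (Nat.Partition.ofComposition n c = P) ↔ ((c.blocks : Multiset ℕ) = P.parts) := by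
    intro c
    constructor
    · intro h; rw [← h]; rfl
    · intro h; exact Nat.Partition.ext h
  have hcard : (Finset.univ.filter
      fun c : Composition n => Nat.Partition.ofComposition n c = P).card
        = (perms P.parts).card := by
    apply Finset.card_bij (fun c _ => c.blocks)
    · intro c hc
      rw [mem_perms]
      exact (hmem c).mp (Finset.mem_filter.mp hc).2
    · intro c _ d _ h
      exact Composition.ext h
    · intro l hl
      rw [mem_perms] at hl
      have hpos : ∀ i ∈ l, 0 < i := fun i hi =>
        P.parts_pos (by rw [← hl]; exact hi)
      have hsum : l.sum = n := by
        have := P.parts_sum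
        rw [← hl, Multiset.sum_coe] at this
        exact this
      refine ⟨⟨l, fun {i} hi => hpos i hi, hsum⟩, ?_, rfl⟩
      rw [Finset.mem_filter]
      exact ⟨Finset.mem_univ _, (hmem _).mpr hl⟩
  rw [hcard]
  exact perms_card _ _ rfl


lemma symm_length (n : ℕ) (hn : 1 ≤ n) (S : Finset (Fin (n - 1))) :
    ((compositionAsSetEquiv n).symm S).length = S.card + 1 := by
  classical
  set d := (compositionAsSetEquiv n).symm S with hd
  set sh : Fin (n-1) → Fin (n+1) := fun j => (⟨(j : ℕ) + 1, by omega⟩ : Fin (n+1)) with hsh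
  have hb : d.boundaries = insert 0 (insert (Fin.last n) (S.image sh)) := by
    ext i
    simp only [hd, compositionAsSetEquiv, Equiv.coe_fn_symm_mk, Set.toFinset_setOf,
      Finset.mem_filter, Finset.mem_univ, true_and, Finset.mem_insert, Finset.mem_image]
    constructor
    · rintro (h | h | ⟨j, hj, hij⟩)
      · exact Or.inl h
      · exact Or.inr (Or.inl h)
      · exact Or.inr (Or.inr ⟨j, hj, Fin.ext (by simp [hsh, hij])⟩)
    · rintro (h | h | ⟨j, hj, hij⟩)
      · exact Or.inl h
      · exact Or.inr (Or.inl h)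
      · exact Or.inr (Or.inr ⟨j, hj, by rw [← hij]⟩)
  have hcard : d.boundaries.card = S.card + 2 := by
    have h0 : (0 : Fin (n+1)) ∉ insert (Fin.last n) (S.image sh) := by
      simp only [Finset.mem_insert, Finset.mem_image, not_or, not_exists]
      constructor
      · rw [Fin.ext_iff]; simp; omega
      · intro j hj
        have h := hj.2
        rw [Fin.ext_iff] at h; simp [hsh] at h
    have hl : Fin.last n ∉ S.image sh := by
      simp only [Finset.mem_image, not_exists]
      intro j hj
      have h := hj.2
      rw [Fin.ext_iff] at h
      simp only [hsh, Fin.val_last] at h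
      have := j.isLt
      omega
    have hinj : Set.InjOn sh S := by
      intro a _ b _ h
      rw [Fin.ext_iff] at h
      simp only [hsh] at h
      exact Fin.ext (by omega)
    rw [hb, Finset.card_insert_of_notMem h0, Finset.card_insert_of_notMem hl,
      Finset.card_image_of_injOn hinj]
  have := d.card_boundaries_eq_succ_length
  omega

lemma comp_sum (n M : ℕ) (hn : 1 ≤ n) :
    ∑ c : Composition n, M.choose c.length = (M + n - 1).choose n := by
  classical
  have h1 : ∑ c : Composition n, M.choose c.length
      = ∑ d : CompositionAsSet n, M.choose d.length := by
    apply Fintype.sum_equiv (compositionEquiv n)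
    intro c
    simp [compositionEquiv]
  have h2 : ∑ d : CompositionAsSet n, M.choose d.length
      = ∑ S : Finset (Fin (n - 1)), M.choose (S.card + 1) := by
    refine (Fintype.sum_equiv (compositionAsSetEquiv n).symm _ _ ?_).symm
    intro S
    rw [symm_length n hn S]
  rw [h1, h2]
  -- sum over all subsets grouped by cardinality
  have h3 : ∑ S : Finset (Fin (n - 1)), M.choose (S.card + 1)
      = ∑ j ∈ Finset.range (n - 1 + 1), (n-1).choose j * M.choose (j + 1) := by
    rw [← Finset.powerset_univ, Finset.sum_powerset]
    simp only [Finset.card_univ, Fintype.card_fin]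
    refine Finset.sum_congr rfl ?_
    intro j _
    rw [Finset.sum_powersetCard j Finset.univ (fun k => M.choose (k + 1))]
    simp [Finset.card_univ, mul_comm]
  rw [h3]
  -- Vandermonde
  have hv : (M + (n-1)).choose ((n-1) + 1)
      = ∑ ij ∈ Finset.HasAntidiagonal.antidiagonal ((n-1)+1), M.choose ij.1 * (n-1).choose ij.2 :=
    Nat.add_choose_eq M (n-1) ((n-1)+1)
  rw [Finset.Nat.sum_antidiagonal_eq_sum_range_succ_mk] at hv
  rw [Finset.sum_range_succ' _ ((n-1)+1)] at hv
  simp only [Nat.choose_zero_right, one_mul, Nat.sub_zero] at hv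
  have hz : (n-1).choose ((n-1) + 1) = 0 := Nat.choose_eq_zero_of_lt (by omega)
  have hfin : (M + n - 1).choose n = (M + (n-1)).choose ((n-1)+1) := by
    congr 1 <;> omega
  rw [hfin, hv]
  rw [hz, add_zero]
  refine Finset.sum_congr rfl ?_
  intro j hj
  rw [Finset.mem_range] at hj
  have : (n - 1) + 1 - (j + 1) = (n-1) - j := by omega
  rw [this, Nat.choose_symm (by omega : j ≤ n - 1), mul_comm]






lemma prod_cast_descFactorial (k M : ℕ) :
    ∏ i ∈ Finset.range k, ((M : ℚ) - (i : ℚ)) = (M.descFactorial k : ℚ) := by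
  induction k with
  | zero => simp
  | succ k IH =>
    rw [Finset.prod_range_succ, IH, Nat.descFactorial_succ]
    by_cases h : k ≤ M
    · push_cast [Nat.cast_sub h]
      ring
    · rw [Nat.descFactorial_eq_zero_iff_lt.mpr (show M < k by omega)]
      simp

lemma numeric (n : ℕ) (hn : 1 ≤ n) (M : ℕ) :
    ∑ P : n.Partition,
        (∏ b ∈ P.parts.toFinset, ((P.parts.count b).factorial : ℚ))⁻¹
          * (M.descFactorial (Multiset.card P.parts) : ℚ)
      = ((M + n - 1).choose n : ℚ) := by
  classical
  have hterm : ∀ P : n.Partition,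
      (∏ b ∈ P.parts.toFinset, ((P.parts.count b).factorial : ℚ))⁻¹
          * (M.descFactorial (Multiset.card P.parts) : ℚ)
        = ((Finset.univ.filter
              fun c : Composition n => Nat.Partition.ofComposition n c = P).card
            * M.choose (Multiset.card P.parts) : ℕ) := by
    intro P
    have hprodne : (∏ b ∈ P.parts.toFinset, ((P.parts.count b).factorial : ℚ)) ≠ 0 := by
      refine Finset.prod_ne_zero_iff.mpr ?_
      intro b _
      exact_mod_cast (Nat.factorial_pos _).ne'
    have hfc := fiber_card n P
    have hfcq : ((Finset.univ.filter
          fun c : Composition n => Nat.Partition.ofComposition n c = P).card : ℚ)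
        * ∏ b ∈ P.parts.toFinset, ((P.parts.count b).factorial : ℚ)
        = ((Multiset.card P.parts).factorial : ℚ) := by
      exact_mod_cast congrArg (fun x : ℕ => (x : ℚ)) hfc
    rw [Nat.descFactorial_eq_factorial_mul_choose]
    push_cast
    field_simp
    rw [← hfcq]
    ring
  rw [Finset.sum_congr rfl (fun P _ => hterm P)]
  rw [← Nat.cast_sum]
  rw [← comp_sum n M hn]
  congr 1
  have := Finset.sum_fiberwise_of_maps_to
    (fun (c : Composition n) (_ : c ∈ Finset.univ) =>
      Finset.mem_univ (Nat.Partition.ofComposition n c))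
    (fun c => M.choose c.length)
  rw [← this]
  refine Finset.sum_congr rfl ?_
  intro P _
  have hlen : ∀ c ∈ Finset.univ.filter
      fun c : Composition n => Nat.Partition.ofComposition n c = P,
      M.choose c.length = M.choose (Multiset.card P.parts) := by
    intro c hc
    have h := (Finset.mem_filter.mp hc).2
    have : P.parts = (c.blocks : Multiset ℕ) := by rw [← h]; rfl
    rw [this, Multiset.coe_card, Composition.blocks_length]
  rw [Finset.sum_congr rfl hlen, Finset.sum_const, smul_eq_mul]







lemma key (n : ℕ) (hn : 1 ≤ n) :
    ∑ P : n.Partition,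
        ((∏ b ∈ P.parts.toFinset, ((P.parts.count b).factorial : ℚ))⁻¹ •
          ∏ i ∈ Finset.range (Multiset.card P.parts), ((X : ℚ[X]) - (i : ℚ[X])))
      = ((n.factorial : ℚ))⁻¹ •
          ∏ i ∈ Finset.range n, ((X : ℚ[X]) + (n : ℚ[X]) - 1 - (i : ℚ[X])) := by
  apply Polynomial.eq_of_infinite_eval_eq
  apply Set.Infinite.mono (s := Set.range ((↑) : ℕ → ℚ))
  swap
  · exact Set.infinite_range_of_injective Nat.cast_injective
  rintro x ⟨M, rfl⟩
  simp only [Set.mem_setOf_eq, eval_finset_sum, eval_smul, eval_prod, eval_sub, eval_add,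
    eval_X, eval_natCast, eval_one, smul_eq_mul]
  have hL : ∀ P : n.Partition,
      ∏ i ∈ Finset.range (Multiset.card P.parts), ((M : ℚ) - (i : ℚ))
        = (M.descFactorial (Multiset.card P.parts) : ℚ) := fun P =>
    prod_cast_descFactorial _ M
  calc ∑ P : n.Partition,
        (∏ b ∈ P.parts.toFinset, ((P.parts.count b).factorial : ℚ))⁻¹ *
          ∏ i ∈ Finset.range (Multiset.card P.parts), ((M : ℚ) - (i : ℚ))
      = ((M + n - 1).choose n : ℚ) := by
        rw [Finset.sum_congr rfl (fun P _ => by rw [hL P])]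
        exact numeric n hn M
    _ = (n.factorial : ℚ)⁻¹ * ∏ i ∈ Finset.range n, ((M : ℚ) + (n : ℚ) - 1 - (i : ℚ)) := by
        have hcast : ∀ i : ℕ, (M : ℚ) + (n : ℚ) - 1 - (i : ℚ)
            = (((M + n - 1 : ℕ)) : ℚ) - (i : ℚ) := by
          intro i
          push_cast [Nat.cast_sub (show 1 ≤ M + n by omega)]
          ring
        rw [Finset.prod_congr rfl (fun i _ => hcast i), prod_cast_descFactorial,
          Nat.descFactorial_eq_factorial_mul_choose]
        push_cast
        rw [← mul_assoc, inv_mul_cancel₀ (by exact_mod_cast (Nat.factorial_pos n).ne'), one_mul]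

/-- For any rational polynomial `m ∈ ℚ[q]` and any positive integer `n`,
`∑_{λ ⊢ n} binom(m; E(λ)) = binom(m+n−1, n)`, where `E(λ)` is the multiset of
multiplicities of `λ` and `binom(m; k_1,…,k_s) = m(m−1)⋯(m+1−∑k_i)/(k_1!⋯k_s!)`. -/
theorem partition_multinomial_sum (n : ℕ) (hn : 1 ≤ n) (m : ℚ[X]) :
    ∑ P : n.Partition,
        ((∏ b ∈ P.parts.toFinset, ((P.parts.count b).factorial : ℚ))⁻¹ •
          ∏ i ∈ Finset.range (Multiset.card P.parts), (m - (i : ℚ[X])))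
      = ((n.factorial : ℚ))⁻¹ •
          ∏ i ∈ Finset.range n, (m + (n : ℚ[X]) - 1 - (i : ℚ[X])) := by
  have h := congrArg (aeval m) (key n hn)
  simpa only [map_sum, map_smul, map_prod, map_sub, map_add, map_one, aeval_X, map_natCast]
    using h
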